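/- Let X be n-Hausdorff and Y = n-κX the simple n-H-closed extension obtained by adding, for each non-full open ultrafilter U_α on X (|aU_α| < n−1), a set of n−1−|aU_α| new points each with neighborhood filter trace U_α. If Z is any n-H-closed extension of X, then there is a continuous surjection f : Y → Z with f(x) = x for all x ∈ X. -/

import Mathlib

open Set Topology Function

universe u v

/-- A space is `n`-Hausdorff if any `n` distinct points admit open neighborhoods
with empty intersection. -/
def NHausdorff (X : Type u) [TopologicalSpace X] (n : ℕ) : Prop :=
  ∀ x : Fin n → X, Function.Injective x →
    ∃ U : Fin n → Set X, (∀ i, IsOpen (U i) ∧ x i ∈ U i) ∧ (⋂ i, U i) = (∅ : Set X)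

/-- An open filter on `X`: a nonempty family of nonempty open sets closed under
finite intersections and open supersets. -/
structure IsOpenFilter {X : Type u} [TopologicalSpace X] (F : Set (Set X)) : Prop where
  nonempty : F.Nonempty
  isOpen_mem : ∀ U ∈ F, IsOpen U
  nonempty_mem : ∀ U ∈ F, U.Nonempty
  inter_mem : ∀ U ∈ F, ∀ V ∈ F, U ∩ V ∈ F
  superset_mem : ∀ U ∈ F, ∀ V : Set X, IsOpen V → U ⊆ V → V ∈ F

/-- An open ultrafilter: a maximal open filter. -/
def IsOpenUltrafilter {X : Type u} [TopologicalSpace X] (F : Set (Set X)) : Prop :=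
  IsOpenFilter F ∧ ∀ G : Set (Set X), IsOpenFilter G → F ⊆ G → G = F

/-- The adherence of a family of sets: `⋂ {cl U : U ∈ F}`. -/
def adh {X : Type u} [TopologicalSpace X] (F : Set (Set X)) : Set X :=
  ⋂ U ∈ F, closure U

/-- `X` is `n`-H-closed: `X` is `n`-Hausdorff and closed in every `n`-Hausdorff space
in which it embeds. -/
def NHClosed (X : Type u) [TopologicalSpace X] (n : ℕ) : Prop :=
  NHausdorff X n ∧
    ∀ (Z : Type u) (_ : TopologicalSpace Z) (e : X → Z),
      NHausdorff Z n → IsEmbedding e → IsClosed (Set.range e)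

lemma univ_mem_of_isOpenFilter {X : Type u} [TopologicalSpace X] {F : Set (Set X)}
    (hF : IsOpenFilter F) : Set.univ ∈ F := by
  obtain ⟨U, hU⟩ := hF.nonempty
  exact hF.superset_mem U hU Set.univ isOpen_univ (Set.subset_univ U)

/-- The non-full open ultrafilters on `X`: those with fewer than `n-1` adherent points. -/
def NonFullUlt (X : Type u) [TopologicalSpace X] (n : ℕ) : Type u :=
  {F : Set (Set X) // IsOpenUltrafilter F ∧ (adh F).encard < (n - 1 : ℕ)}

/-- The points added to `X` to form `n-κX`: for each non-full open ultrafilter `U`,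
a set of `n - 1 - |aU|` new points. -/
def KPoints (X : Type u) [TopologicalSpace X] (n : ℕ) : Type u :=
  Σ F : NonFullUlt X n, Fin (n - 1 - (adh F.val).ncard)

/-- The underlying set of the Katětov-type extension `n-κX`. -/
def nKatetov (X : Type u) [TopologicalSpace X] (n : ℕ) : Type u :=
  X ⊕ KPoints X n

/-- The topology of `n-κX`: `V` is open iff `V ∩ X` is open in `X` and each added point
`p` (associated to the ultrafilter `p.1`) in `V` satisfies `V ∩ X ∈ p.1`. -/
def nKatetovTop (X : Type u) [TopologicalSpace X] (n : ℕ) :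
    TopologicalSpace (nKatetov X n) where
  IsOpen V := IsOpen (Sum.inl ⁻¹' V : Set X) ∧
    ∀ p : KPoints X n, Sum.inr p ∈ V → Sum.inl ⁻¹' V ∈ p.1.val
  isOpen_univ := by
    exact ⟨isOpen_univ, fun p _ => univ_mem_of_isOpenFilter p.1.property.1.1⟩
  isOpen_inter := by
    rintro s t ⟨hs1, hs2⟩ ⟨ht1, ht2⟩
    exact ⟨hs1.inter ht1, fun p hp => p.1.property.1.1.inter_mem _ (hs2 p hp.1) _ (ht2 p hp.2)⟩
  isOpen_sUnion := by
    intro S hS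
    have hop : IsOpen (Sum.inl ⁻¹' ⋃₀ S : Set X) := by
      have heq : (Sum.inl ⁻¹' ⋃₀ S : Set X) = ⋃ s ∈ S, (Sum.inl ⁻¹' s : Set X) := by
        ext x
        exact ⟨fun ⟨s, hsS, hx⟩ => Set.mem_iUnion₂.2 ⟨s, hsS, hx⟩,
          fun h => by obtain ⟨s, hsS, hx⟩ := Set.mem_iUnion₂.1 h; exact ⟨s, hsS, hx⟩⟩
      rw [heq]
      exact isOpen_biUnion fun s hs => (hS s hs).1
    refine ⟨hop, ?_⟩
    rintro p ⟨s, hsS, hps⟩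
    exact p.1.property.1.1.superset_mem _ ((hS s hsS).2 p hps) _ hop
      (fun x hx => ⟨s, hsS, hx⟩)

section Aux

variable {X : Type u} {Z : Type v} [TopologicalSpace X] [TopologicalSpace Z]

lemma IsOpenFilter.biInter_mem {F : Set (Set X)} (hF : IsOpenFilter F)
    {ι : Type*} [DecidableEq ι] (s : Finset ι) (A : ι → Set X) (h : ∀ i ∈ s, A i ∈ F) :
    (⋂ i ∈ s, A i) ∈ F := by
  induction s using Finset.induction_on with
  | empty => simpa using univ_mem_of_isOpenFilter hF
  | @insert a s ha ih =>
      rw [Finset.set_biInter_insert]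
      exact hF.inter_mem _ (h a (Finset.mem_insert_self a s)) _
        (ih fun i hi => h i (Finset.mem_insert_of_mem hi))

lemma IsOpenFilter.iInter_mem {F : Set (Set X)} (hF : IsOpenFilter F)
    {ι : Type*} [Fintype ι] (A : ι → Set X) (h : ∀ i, A i ∈ F) :
    (⋂ i, A i) ∈ F := by
  classical
  have : (⋂ i, A i) = ⋂ i ∈ Finset.univ, A i := by simp
  rw [this]
  exact hF.biInter_mem Finset.univ A fun i _ => h i

/-- The ultrafilter membership test: an open set meeting every member is a member. -/
lemma IsOpenUltrafilter.mem_of_forall_inter {F : Set (Set X)} (hF : IsOpenUltrafilter F)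
    {V : Set X} (hV : IsOpen V) (h : ∀ W ∈ F, (V ∩ W).Nonempty) : V ∈ F := by
  set G : Set (Set X) := {W | IsOpen W ∧ ∃ V' ∈ F, V ∩ V' ⊆ W} with hG
  have hGF : IsOpenFilter G := by
    constructor
    · exact ⟨V, hV, Set.univ, univ_mem_of_isOpenFilter hF.1, by simp⟩
    · exact fun U hU => hU.1
    · rintro U ⟨hUo, V', hV', hsub⟩
      exact (h V' hV').mono hsub
    · rintro U ⟨hUo, V1, hV1, h1⟩ W ⟨hWo, V2, hV2, h2⟩
      refine ⟨hUo.inter hWo, V1 ∩ V2, hF.1.inter_mem _ hV1 _ hV2, ?_⟩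
      rintro x ⟨hx, h1', h2'⟩
      exact ⟨h1 ⟨hx, h1'⟩, h2 ⟨hx, h2'⟩⟩
    · rintro U ⟨hUo, V', hV', hsub⟩ W hWo hUW
      exact ⟨hWo, V', hV', hsub.trans hUW⟩
  have hFG : F ⊆ G := fun U hU =>
    ⟨hF.1.isOpen_mem U hU, U, hU, Set.inter_subset_right⟩
  have : G = F := hF.2 G hGF hFG
  rw [← this]
  exact ⟨hV, Set.univ, univ_mem_of_isOpenFilter hF.1, by simp⟩

lemma mem_adh_iff {F : Set (Set X)} {z : X} : z ∈ adh F ↔ ∀ U ∈ F, z ∈ closure U := by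
  simp [adh]

/-- An open ultrafilter converges to each of its adherent points. -/
lemma IsOpenUltrafilter.nhd_mem_of_adh {F : Set (Set X)} (hF : IsOpenUltrafilter F)
    {z : X} (hz : z ∈ adh F) {V : Set X} (hV : IsOpen V) (hzV : z ∈ V) : V ∈ F := by
  refine hF.mem_of_forall_inter hV fun W hW => ?_
  exact mem_closure_iff.1 (mem_adh_iff.1 hz W hW) V hV hzV

/-- Every open filter extends to an open ultrafilter. -/
lemma IsOpenFilter.exists_ultrafilter {F : Set (Set X)} (hF : IsOpenFilter F) :
    ∃ G, IsOpenUltrafilter G ∧ F ⊆ G := by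
  have hch : ∀ c ⊆ {G : Set (Set X) | IsOpenFilter G}, IsChain (· ⊆ ·) c → c.Nonempty →
      ∃ ub ∈ {G : Set (Set X) | IsOpenFilter G}, ∀ s ∈ c, s ⊆ ub := by
    intro c hc hchain hcne
    refine ⟨⋃₀ c, ?_, fun s hs => Set.subset_sUnion_of_mem hs⟩
    obtain ⟨G0, hG0⟩ := hcne
    constructor
    · obtain ⟨U, hU⟩ := (hc hG0).nonempty
      exact ⟨U, G0, hG0, hU⟩
    · rintro U ⟨G, hGc, hUG⟩
      exact (hc hGc).isOpen_mem U hUG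
    · rintro U ⟨G, hGc, hUG⟩
      exact (hc hGc).nonempty_mem U hUG
    · rintro U ⟨G1, hG1, hU1⟩ V ⟨G2, hG2, hV2⟩
      rcases hchain.total hG1 hG2 with h12 | h21
      · exact ⟨G2, hG2, (hc hG2).inter_mem _ (h12 hU1) _ hV2⟩
      · exact ⟨G1, hG1, (hc hG1).inter_mem _ hU1 _ (h21 hV2)⟩
    · rintro U ⟨G, hGc, hUG⟩ V hVo hUV
      exact ⟨G, hGc, (hc hGc).superset_mem _ hUG _ hVo hUV⟩
  obtain ⟨m, hFm, hm⟩ := zorn_subset_nonempty _ hch F hF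
  exact ⟨m, ⟨hm.1, fun G hG hmG => (hm.2 hG hmG).antisymm hmG⟩, hFm⟩

end Aux
section OPE

variable {Z : Type u} [TopologicalSpace Z]

/-- One-point extension of `Z` along an open filter `G`. -/
def OPTop (G : Set (Set Z)) (hG : IsOpenFilter G) :
    TopologicalSpace (Z ⊕ PUnit.{u+1}) where
  IsOpen V := IsOpen (Sum.inl ⁻¹' V : Set Z) ∧
    ∀ p : PUnit.{u+1}, Sum.inr p ∈ V → Sum.inl ⁻¹' V ∈ G
  isOpen_univ := by
    refine ⟨by simpa using isOpen_univ, fun p _ => ?_⟩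
    simpa using univ_mem_of_isOpenFilter hG
  isOpen_inter := by
    rintro s t ⟨hs1, hs2⟩ ⟨ht1, ht2⟩
    refine ⟨by rw [Set.preimage_inter]; exact hs1.inter ht1, fun p hp => ?_⟩
    rw [Set.preimage_inter]
    exact hG.inter_mem _ (hs2 p hp.1) _ (ht2 p hp.2)
  isOpen_sUnion := by
    intro S hS
    have hop : IsOpen (Sum.inl ⁻¹' ⋃₀ S : Set Z) := by
      rw [Set.preimage_sUnion]
      exact isOpen_biUnion fun s hs => (hS s hs).1
    refine ⟨hop, ?_⟩
    rintro p ⟨s, hsS, hps⟩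
    exact hG.superset_mem _ ((hS s hsS).2 p hps) _ hop (fun x hx => ⟨s, hsS, hx⟩)

lemma OPTop_isOpen_iff {G : Set (Set Z)} (hG : IsOpenFilter G) (V : Set (Z ⊕ PUnit.{u+1})) :
    IsOpen[OPTop G hG] V ↔ IsOpen (Sum.inl ⁻¹' V : Set Z) ∧
      ∀ p : PUnit.{u+1}, Sum.inr p ∈ V → Sum.inl ⁻¹' V ∈ G :=
  Iff.rfl

lemma OPTop_isEmbedding_inl {G : Set (Set Z)} (hG : IsOpenFilter G) :
    @IsEmbedding Z (Z ⊕ PUnit.{u+1}) _ (OPTop G hG) Sum.inl := by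
  letI := OPTop G hG
  refine ⟨⟨TopologicalSpace.ext_iff.2 fun s => ?_⟩, fun a b h => by simpa using h⟩
  rw [isOpen_induced_iff]
  constructor
  · intro hs
    refine ⟨Sum.inl '' s, ?_, Set.preimage_image_eq s Sum.inl_injective⟩
    refine (OPTop_isOpen_iff hG _).2 ⟨?_, fun p hp => absurd hp (by simp)⟩
    rwa [Set.preimage_image_eq s Sum.inl_injective]
  · rintro ⟨t, ht, rfl⟩
    exact ((OPTop_isOpen_iff hG t).1 ht).1

/-- On an `n`-H-closed space, every open ultrafilter has an adherent point. -/
lemma adh_nonempty_of_nHClosed {n : ℕ} (hn : 2 ≤ n) (hZ : NHClosed Z n)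
    {G : Set (Set Z)} (hG : IsOpenUltrafilter G) : (adh G).Nonempty := by
  by_contra hem
  rw [Set.not_nonempty_iff_eq_empty] at hem
  letI tP := OPTop G hG.1
  have hemb := OPTop_isEmbedding_inl (Z := Z) hG.1
  -- Z ⊕ PUnit is n-Hausdorff
  have hH : @NHausdorff (Z ⊕ PUnit.{u+1}) tP n := by
    intro x hx
    by_cases hall : ∀ i, ∃ z, x i = Sum.inl z
    · choose z hz using hall
      have hzinj : Function.Injective z := fun a b hab =>
        hx (by rw [hz a, hz b, hab])
      obtain ⟨U, hU, hiU⟩ := hZ.1 z hzinj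
      refine ⟨fun i => Sum.inl '' U i, fun i => ⟨?_, ?_⟩, ?_⟩
      · refine (OPTop_isOpen_iff hG.1 _).2 ⟨?_, fun p hp => absurd hp (by simp)⟩
        rw [Set.preimage_image_eq _ Sum.inl_injective]; exact (hU i).1
      · rw [hz i]; exact ⟨_, (hU i).2, rfl⟩
      · ext y
        simp only [Set.mem_iInter, Set.mem_empty_iff_false, iff_false]
        intro hy
        obtain ⟨w, hw0, hwy⟩ := hy ⟨0, by omega⟩
        have hwall : ∀ i, w ∈ U i := by
          intro i
          obtain ⟨w', hw', hwy'⟩ := hy i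
          have : w' = w := Sum.inl_injective (hwy'.trans hwy.symm)
          rwa [this] at hw'
        have : w ∈ ⋂ i, U i := Set.mem_iInter.2 hwall
        rw [hiU] at this
        exact this
    · push_neg at hall
      obtain ⟨j, hj⟩ := hall
      obtain ⟨p, hjp⟩ : ∃ p, x j = Sum.inr p := by
        cases hxj : x j with
        | inl w => exact absurd hxj (hj w)
        | inr p => exact ⟨p, rfl⟩
      have hz : ∀ i, i ≠ j → ∃ w, x i = Sum.inl w := by
        intro i hij
        cases hxi : x i with
        | inl w => exact ⟨w, rfl⟩
        | inr p' =>
            exfalso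
            exact hij (hx (by rw [hxi, hjp]))
      choose w hw using hz
      have hUex : ∀ i (hij : i ≠ j), ∃ U ∈ G, w i hij ∉ closure U := by
        intro i hij
        by_contra hc
        push_neg at hc
        have : w i hij ∈ adh G := mem_adh_iff.2 hc
        rw [hem] at this
        exact this
      choose U hUG hUcl using hUex
      classical
      set U' : Fin n → Set Z := fun k => if hk : k = j then Set.univ else U k hk with hU'
      have hU'mem : ∀ k, U' k ∈ G := by
        intro k
        by_cases hk : k = j
        · rw [hU']; simp only [hk, dif_pos]; exact univ_mem_of_isOpenFilter hG.1
        · rw [hU']; simp only [dif_neg hk]; exact hUG k hk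
      have hIU' : (⋂ k, U' k) ∈ G := hG.1.iInter_mem U' hU'mem
      refine ⟨fun i => if hij : i = j then Sum.inl '' (⋂ k, U' k) ∪ {Sum.inr p}
        else Sum.inl '' (closure (U i hij))ᶜ, fun i => ?_, ?_⟩
      · by_cases hij : i = j
        · simp only [dif_pos hij]
          constructor
          · refine (OPTop_isOpen_iff hG.1 _).2 ⟨?_, fun q hq => ?_⟩
            · have hpre : Sum.inl ⁻¹' (Sum.inl '' (⋂ k, U' k) ∪ {Sum.inr p})
                  = ⋂ k, U' k := by
                have h0 : (Sum.inl ⁻¹' ({Sum.inr p} : Set (Z ⊕ PUnit.{u+1})) : Set Z) = ∅ := by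
                  ext z; simp
                rw [Set.preimage_union, Set.preimage_image_eq _ Sum.inl_injective, h0,
                  Set.union_empty]
              rw [hpre]
              exact hG.1.isOpen_mem _ hIU'
            · have hpre : Sum.inl ⁻¹' (Sum.inl '' (⋂ k, U' k) ∪ {Sum.inr p})
                  = ⋂ k, U' k := by
                have h0 : (Sum.inl ⁻¹' ({Sum.inr p} : Set (Z ⊕ PUnit.{u+1})) : Set Z) = ∅ := by
                  ext z; simp
                rw [Set.preimage_union, Set.preimage_image_eq _ Sum.inl_injective, h0,
                  Set.union_empty]
              rw [hpre]; exact hIU'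
          · rw [hij, hjp]; exact Or.inr rfl
        · simp only [dif_neg hij]
          constructor
          · refine (OPTop_isOpen_iff hG.1 _).2 ⟨?_, fun q hq => absurd hq (by simp)⟩
            rw [Set.preimage_image_eq _ Sum.inl_injective]
            exact isClosed_closure.isOpen_compl
          · rw [hw i hij]
            exact ⟨_, hUcl i hij, rfl⟩
      · ext y
        simp only [Set.mem_iInter, Set.mem_empty_iff_false, iff_false]
        intro hy
        obtain ⟨i₀, hi₀⟩ : ∃ i₀ : Fin n, i₀ ≠ j := by
          haveI : Nontrivial (Fin n) :=
            ⟨⟨⟨0, by omega⟩, ⟨1, by omega⟩, by simp [Fin.ext_iff]⟩⟩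
          exact exists_ne j
        have h1 := hy i₀
        rw [dif_neg hi₀] at h1
        obtain ⟨yw, hyw, hywy⟩ := h1
        have h2 := hy j
        rw [dif_pos rfl] at h2
        rcases h2 with h2 | h2
        · obtain ⟨yw', hyw', hywy'⟩ := h2
          have : yw' = yw := Sum.inl_injective (hywy'.trans hywy.symm)
          rw [this] at hyw'
          have : yw ∈ U' i₀ := Set.mem_iInter.1 hyw' i₀
          rw [hU'] at this
          simp only [dif_neg hi₀] at this
          exact hyw (subset_closure this)
        · rw [← hywy] at h2
          simp at h2
  have hcl := hZ.2 (Z ⊕ PUnit.{u+1}) tP Sum.inl hH hemb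
  have hmem : Sum.inr PUnit.unit ∈ closure[tP] (Set.range (Sum.inl : Z → Z ⊕ PUnit.{u+1})) := by
    letI := tP
    rw [mem_closure_iff]
    intro o ho hpo
    obtain ⟨ho1, ho2⟩ := (OPTop_isOpen_iff hG.1 o).1 ho
    obtain ⟨z, hz⟩ := hG.1.nonempty_mem _ (ho2 PUnit.unit hpo)
    exact ⟨Sum.inl z, hz, z, rfl⟩
  letI := tP
  have := hcl.closure_subset hmem
  simp at this

end OPE
section Push

variable {X : Type u} {Z : Type v} [TopologicalSpace X] [TopologicalSpace Z]

/-- In an `n`-Hausdorff space, an open ultrafilter has at most `n-1` adherent points. -/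
lemma encard_adh_le {n : ℕ} (hn : 2 ≤ n) (hZn : NHausdorff Z n)
    {G : Set (Set Z)} (hG : IsOpenUltrafilter G) : (adh G).encard ≤ (n - 1 : ℕ) := by
  by_contra h
  push_neg at h
  have h' : (n : ℕ∞) ≤ (adh G).encard := by
    have h1 : ((n - 1 : ℕ) : ℕ∞) + 1 ≤ (adh G).encard :=
      (ENat.add_one_le_iff (by simp)).2 h
    have h2 : ((n - 1 : ℕ) : ℕ∞) + 1 = (n : ℕ∞) := by
      norm_cast
      omega
    rwa [h2] at h1
  obtain ⟨t, hts, ht⟩ := Set.exists_subset_encard_eq h'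
  have htf : t.Finite := Set.finite_of_encard_eq_coe ht
  haveI : Finite t := htf
  have hcard : Nat.card t = n := by
    rw [Nat.card_coe_set_eq, Set.ncard_def, ht]
    simp
  let E : t ≃ Fin n := Finite.equivFinOfCardEq hcard
  set x : Fin n → Z := fun i => (E.symm i : Z) with hx
  have hxinj : Function.Injective x := by
    intro a b hab
    have : E.symm a = E.symm b := Subtype.ext hab
    simpa using congrArg E this
  obtain ⟨U, hU, hiU⟩ := hZn x hxinj
  have hUG : ∀ i, U i ∈ G := by
    intro i
    have hxadh : x i ∈ adh G := hts (E.symm i).2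
    exact hG.nhd_mem_of_adh hxadh (hU i).1 (hU i).2
  have hne := hG.1.nonempty_mem _ (hG.1.iInter_mem U hUG)
  rw [hiU] at hne
  exact Set.not_nonempty_empty hne

/-- The pushforward of an open filter along a map. -/
def pushF (e : X → Z) (F : Set (Set X)) : Set (Set Z) :=
  {W | IsOpen W ∧ e ⁻¹' W ∈ F}

lemma pushF_isOpenUltrafilter {e : X → Z} (he : IsEmbedding e) (hd : Dense (Set.range e))
    {F : Set (Set X)} (hF : IsOpenUltrafilter F) : IsOpenUltrafilter (pushF e F) := by
  have hpre_mem : ∀ W : Set Z, IsOpen W → (∀ U ∈ F, ((e ⁻¹' W) ∩ U).Nonempty) →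
      e ⁻¹' W ∈ F := fun W hW h =>
    hF.mem_of_forall_inter (hW.preimage he.continuous) h
  have hfil : IsOpenFilter (pushF e F) := by
    constructor
    · exact ⟨Set.univ, isOpen_univ, by simpa using univ_mem_of_isOpenFilter hF.1⟩
    · exact fun W hW => hW.1
    · rintro W ⟨hWo, hWF⟩
      obtain ⟨x, hx⟩ := hF.1.nonempty_mem _ hWF
      exact ⟨e x, hx⟩
    · rintro W1 ⟨h1o, h1F⟩ W2 ⟨h2o, h2F⟩
      exact ⟨h1o.inter h2o, by rw [Set.preimage_inter]; exact hF.1.inter_mem _ h1F _ h2F⟩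
    · rintro W ⟨hWo, hWF⟩ V hVo hWV
      exact ⟨hVo, hF.1.superset_mem _ hWF _ (hVo.preimage he.continuous)
        (Set.preimage_mono hWV)⟩
  refine ⟨hfil, fun H hH hFH => ?_⟩
  refine Set.Subset.antisymm (fun W hWH => ?_) hFH
  have hWo : IsOpen W := hH.isOpen_mem W hWH
  refine ⟨hWo, hpre_mem W hWo fun U hU => ?_⟩
  obtain ⟨W', hW'o, hW'pre⟩ := he.isInducing.isOpen_iff.1 (hF.1.isOpen_mem U hU)
  have hW'push : W' ∈ pushF e F := ⟨hW'o, by rw [hW'pre]; exact hU⟩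
  have hmem : W ∩ W' ∈ H := hH.inter_mem _ hWH _ (hFH hW'push)
  have hne : (W ∩ W').Nonempty := hH.nonempty_mem _ hmem
  obtain ⟨y, hy1, hy2⟩ := hd.inter_open_nonempty _ (hWo.inter hW'o) hne
  obtain ⟨x, rfl⟩ := hy2
  exact ⟨x, hy1.1, by rw [← hW'pre]; exact hy1.2⟩

lemma image_adh_subset {e : X → Z} (he : Continuous e) {F : Set (Set X)} :
    e '' adh F ⊆ adh (pushF e F) := by
  rintro _ ⟨x, hx, rfl⟩
  rw [mem_adh_iff]
  rintro W ⟨hWo, hWF⟩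
  have h1 : x ∈ closure (e ⁻¹' W) := mem_adh_iff.1 hx _ hWF
  exact he.closure_preimage_subset W h1

lemma adh_pushF_inter_range {e : X → Z} (he : IsEmbedding e) (hd : Dense (Set.range e))
    {F : Set (Set X)} (hF : IsOpenFilter F) :
    adh (pushF e F) ∩ Set.range e ⊆ e '' adh F := by
  rintro _ ⟨hw, x, rfl⟩
  refine ⟨x, ?_, rfl⟩
  rw [mem_adh_iff]
  intro U hU
  obtain ⟨W', hW'o, hW'pre⟩ := he.isInducing.isOpen_iff.1 (hF.isOpen_mem U hU)
  have hW'push : W' ∈ pushF e F := ⟨hW'o, by rw [hW'pre]; exact hU⟩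
  have hclW : e x ∈ closure W' := mem_adh_iff.1 hw _ hW'push
  have hkey : closure W' ⊆ closure (e '' U) := by
    have h1 : e '' U = W' ∩ Set.range e := by
      rw [← hW'pre, Set.image_preimage_eq_inter_range]
    rw [h1]
    have h2 : W' ⊆ closure (W' ∩ Set.range e) := hd.open_subset_closure_inter hW'o
    calc closure W' ⊆ closure (closure (W' ∩ Set.range e)) := closure_mono h2
      _ = closure (W' ∩ Set.range e) := closure_closure
  rw [he.closure_eq_preimage_closure_image U]
  exact hkey hclW

/-- Existence of a function from `Fin k` covering `S` with values in `T`. -/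
lemma exists_fun_covering {S T : Set Z} (hST : S ⊆ T) (hT : T.Nonempty)
    (hSfin : S.Finite) {k : ℕ} (hcard : S.ncard ≤ k) :
    ∃ g : Fin k → Z, (∀ i, g i ∈ T) ∧ S ⊆ Set.range g := by
  rcases S.eq_empty_or_nonempty with rfl | hSne
  · exact ⟨fun _ => hT.choose, fun _ => hT.choose_spec, by simp⟩
  haveI : Finite S := hSfin
  set m := S.ncard with hm
  have hmpos : 0 < m := (Set.ncard_pos hSfin).2 hSne
  have hcardS : Nat.card S = m := Nat.card_coe_set_eq S
  let E : S ≃ Fin m := Finite.equivFinOfCardEq hcardS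
  refine ⟨fun i => (E.symm ⟨min i (m - 1), by omega⟩ : S), fun i => hST (E.symm _).2, ?_⟩
  intro s hs
  refine ⟨⟨(E ⟨s, hs⟩).val, by have := (E ⟨s, hs⟩).isLt; omega⟩, ?_⟩
  have hmin : min ((E ⟨s, hs⟩).val) (m - 1) = (E ⟨s, hs⟩).val := by
    have := (E ⟨s, hs⟩).isLt
    omega
  show ((E.symm ⟨min ((E ⟨s, hs⟩).val) (m - 1), _⟩ : S) : Z) = s
  have : (⟨min ((E ⟨s, hs⟩).val) (m - 1), by omega⟩ : Fin m) = E ⟨s, hs⟩ := by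
    apply Fin.ext
    simpa using hmin
  rw [this, Equiv.symm_apply_apply]

end Push
theorem stmt16 {X Z : Type u} [TopologicalSpace X] [TopologicalSpace Z]
    (n : ℕ) (hn : 2 ≤ n) (hX : NHausdorff X n)
    (e : X → Z) (he : IsEmbedding e) (hd : Dense (Set.range e))
    (hZ : NHClosed Z n) :
    ∃ f : nKatetov X n → Z,
      Continuous[nKatetovTop X n, _] f ∧ Function.Surjective f ∧
        ∀ x : X, f (Sum.inl x) = e x := by
  classical
  have hpush : ∀ F : NonFullUlt X n, IsOpenUltrafilter (pushF e F.val) :=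
    fun F => pushF_isOpenUltrafilter he hd F.2.1
  have H : ∀ F : NonFullUlt X n, ∃ g : Fin (n - 1 - (adh F.val).ncard) → Z,
      (∀ i, g i ∈ adh (pushF e F.val)) ∧
      adh (pushF e F.val) \ Set.range e ⊆ Set.range g := by
    intro F
    have hGu := hpush F
    have hTne : (adh (pushF e F.val)).Nonempty := adh_nonempty_of_nHClosed hn hZ hGu
    have hTcard : (adh (pushF e F.val)).encard ≤ ((n - 1 : ℕ) : ℕ∞) :=
      encard_adh_le hn hZ.1 hGu
    have hTfin : (adh (pushF e F.val)).Finite := Set.finite_of_encard_le_coe hTcard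
    have hinter : adh (pushF e F.val) ∩ Set.range e = e '' adh F.val := by
      apply Set.Subset.antisymm (adh_pushF_inter_range he hd F.2.1.1)
      rintro _ ⟨x, hx, rfl⟩
      exact ⟨image_adh_subset he.continuous ⟨x, hx, rfl⟩, x, rfl⟩
    have hsplit := Set.ncard_inter_add_ncard_diff_eq_ncard
      (adh (pushF e F.val)) (Set.range e) hTfin
    have hintercard : (adh (pushF e F.val) ∩ Set.range e).ncard = (adh F.val).ncard := by
      rw [hinter, Set.ncard_image_of_injective _ he.injective]
    have hTn : (adh (pushF e F.val)).ncard ≤ n - 1 :=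
      (Set.encard_le_coe_iff_finite_ncard_le.1 hTcard).2
    have hScard : (adh (pushF e F.val) \ Set.range e).ncard ≤
        n - 1 - (adh F.val).ncard := by omega
    exact exists_fun_covering Set.diff_subset hTne hTfin.diff hScard
  choose g hg1 hg2 using H
  refine ⟨Sum.elim e (fun p : KPoints X n => g p.1 p.2), ?_, ?_, fun x => rfl⟩
  · -- continuity
    letI := nKatetovTop X n
    refine continuous_def.2 fun W hW => ?_
    show IsOpen (Sum.inl ⁻¹' (Sum.elim e (fun p : KPoints X n => g p.1 p.2) ⁻¹' W) : Set X) ∧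
      ∀ p : KPoints X n, Sum.inr p ∈ Sum.elim e (fun p : KPoints X n => g p.1 p.2) ⁻¹' W →
        Sum.inl ⁻¹' (Sum.elim e (fun p : KPoints X n => g p.1 p.2) ⁻¹' W) ∈ p.1.val
    have hpre : (Sum.inl ⁻¹' (Sum.elim e (fun p : KPoints X n => g p.1 p.2) ⁻¹' W) : Set X)
        = e ⁻¹' W := rfl
    constructor
    · rw [hpre]
      exact hW.preimage he.continuous
    · intro p hp
      have hadh : g p.1 p.2 ∈ adh (pushF e p.1.val) := hg1 p.1 p.2
      have hWmem : W ∈ pushF e p.1.val := (hpush p.1).nhd_mem_of_adh hadh hW hp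
      rw [hpre]
      exact hWmem.2
  · -- surjectivity
    intro z
    by_cases hz : z ∈ Set.range e
    · obtain ⟨x, rfl⟩ := hz
      exact ⟨Sum.inl x, rfl⟩
    · set T : Set (Set X) := {U | IsOpen U ∧ ∃ V, IsOpen V ∧ z ∈ V ∧ e ⁻¹' V ⊆ U} with hT
      have hTfil : IsOpenFilter T := by
        constructor
        · exact ⟨Set.univ, isOpen_univ, Set.univ, isOpen_univ, Set.mem_univ z, by simp⟩
        · exact fun U hU => hU.1
        · rintro U ⟨hUo, V, hVo, hzV, hsub⟩
          obtain ⟨y, hy1, x, rfl⟩ := hd.inter_open_nonempty V hVo ⟨z, hzV⟩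
          exact ⟨x, hsub hy1⟩
        · rintro U1 ⟨h1o, V1, hV1, hz1, hs1⟩ U2 ⟨h2o, V2, hV2, hz2, hs2⟩
          exact ⟨h1o.inter h2o, V1 ∩ V2, hV1.inter hV2, ⟨hz1, hz2⟩,
            fun x hx => ⟨hs1 hx.1, hs2 hx.2⟩⟩
        · rintro U ⟨hUo, V, hVo, hzV, hsub⟩ U' hU'o hUU'
          exact ⟨hU'o, V, hVo, hzV, hsub.trans hUU'⟩
      obtain ⟨F, hFu, hTF⟩ := hTfil.exists_ultrafilter
      have hzadh : z ∈ adh (pushF e F) := by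
        rw [mem_adh_iff]
        rintro W ⟨hWo, hWF⟩
        rw [mem_closure_iff]
        intro V hVo hzV
        have hVT : e ⁻¹' V ∈ T := ⟨hVo.preimage he.continuous, V, hVo, hzV, Set.Subset.rfl⟩
        obtain ⟨x, hx⟩ := hFu.1.nonempty_mem _ (hFu.1.inter_mem _ (hTF hVT) _ hWF)
        exact ⟨e x, hx.1, hx.2⟩
      have hGu := pushF_isOpenUltrafilter he hd hFu
      have hTcard : (adh (pushF e F)).encard ≤ ((n - 1 : ℕ) : ℕ∞) :=
        encard_adh_le hn hZ.1 hGu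
      have hznot : z ∉ e '' adh F := by
        rintro ⟨x, _, rfl⟩
        exact hz ⟨x, rfl⟩
      have hsub : insert z (e '' adh F) ⊆ adh (pushF e F) :=
        Set.insert_subset hzadh (image_adh_subset he.continuous)
      have hcard1 : (e '' adh F).encard + 1 ≤ ((n - 1 : ℕ) : ℕ∞) := by
        rw [← Set.encard_insert_of_notMem hznot]
        exact le_trans (Set.encard_mono hsub) hTcard
      have hlt : (adh F).encard < ((n - 1 : ℕ) : ℕ∞) := by
        rw [(he.injective.injOn).encard_image] at hcard1
        have hne : (adh F).encard ≠ ⊤ := by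
          intro htop
          rw [htop] at hcard1
          simp at hcard1
        exact (ENat.add_one_le_iff hne).1 hcard1
      have hzS : z ∈ adh (pushF e (⟨F, hFu, hlt⟩ : NonFullUlt X n).val) \ Set.range e :=
        ⟨hzadh, hz⟩
      obtain ⟨i, hi⟩ := hg2 (⟨F, hFu, hlt⟩ : NonFullUlt X n) hzS
      exact ⟨Sum.inr ⟨(⟨F, hFu, hlt⟩ : NonFullUlt X n), i⟩, hi⟩
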